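/- Let f : ℝⁿ → ℝ be convex and D-Lipschitz with D ≥ 0, and let μ > 0. If g ∈ ℝⁿ is a subgradient of the Gaussian-smoothed function f_μ at x, i.e. f_μ(z) ≥ f_μ(x) + ⟨g, z − x⟩ for all z ∈ ℝⁿ, then g is a (μ·D·√n)-subgradient of f at x, i.e. f(z) ≥ f(x) − μ·D·√n + ⟨g, z − x⟩ for all z ∈ ℝⁿ. -/

import Mathlib

open MeasureTheory ProbabilityTheory RealInnerProductSpace Real Set
open scoped NNReal ENNReal

/-- The standard Gaussian measure on `ℝⁿ` (Euclidean space), the product over the `n`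
coordinates of the real Gaussian measure with mean 0 and variance 1. -/
noncomputable def stdGaussian (n : ℕ) : Measure (EuclideanSpace ℝ (Fin n)) :=
  (Measure.pi fun _ : Fin n => gaussianReal 0 1).map
    (MeasurableEquiv.toLp 2 (Fin n → ℝ))

/-- The Gaussian-smoothed function of `f` with smoothing parameter `μ`. -/
noncomputable def gaussianSmoothed {n : ℕ} (f : EuclideanSpace ℝ (Fin n) → ℝ) (μ : ℝ)
    (x : EuclideanSpace ℝ (Fin n)) : ℝ :=
  ∫ ξ, f (x + μ • ξ) ∂(stdGaussian n)


lemma integral_ennreal_smooth :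
    ∫ x : ℝ, x ^ 2 ∂(gaussianReal 0 1) = 1 := by
  rw [gaussianReal_of_var_ne_zero 0 one_ne_zero]
  have hpdf : gaussianPDF 0 1 = fun x => ((Real.toNNReal (gaussianPDFReal 0 1 x) : ℝ≥0) : ℝ≥0∞) := rfl
  rw [hpdf, integral_withDensity_eq_integral_smul
    ((measurable_gaussianPDFReal 0 1).real_toNNReal) (fun x => x ^ 2)]
  have hpt : ∀ x : ℝ, (Real.toNNReal (gaussianPDFReal 0 1 x)) • x ^ 2
      = (Real.sqrt (2 * π))⁻¹ * (x ^ 2 * Real.exp (-(1/2) * x ^ 2)) := by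
    intro x
    rw [NNReal.smul_def, smul_eq_mul, Real.coe_toNNReal _ (gaussianPDFReal_nonneg 0 1 x)]
    rw [gaussianPDFReal]
    push_cast
    ring_nf
  simp_rw [hpt]
  rw [integral_const_mul]
  have h1 : ∫ x : ℝ, x ^ 2 * Real.exp (-(1/2) * x ^ 2)
      = 2 * ∫ x in Ioi (0:ℝ), x ^ 2 * Real.exp (-(1/2) * x ^ 2) := by
    rw [← integral_comp_abs (f := fun t => t ^ 2 * Real.exp (-(1/2) * t ^ 2))]
    congr 1; ext x; rw [sq_abs]
  have h2 := integral_rpow_mul_exp_neg_mul_rpow (p := 2) (q := 2) (b := 1/2)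
    (by norm_num) (by norm_num) (by norm_num)
  have hcast : ∀ x : ℝ, x ^ (2:ℝ) = x ^ (2:ℕ) := fun x => by
    rw [show ((2:ℝ)) = ((2:ℕ):ℝ) by norm_num, Real.rpow_natCast]
  simp_rw [hcast] at h2
  have hgam : Real.Gamma ((2 + 1) / 2) = Real.sqrt π / 2 := by
    rw [show ((2:ℝ) + 1) / 2 = 1/2 + 1 by norm_num, Real.Gamma_add_one (by norm_num),
      Real.Gamma_one_half_eq]
    ring
  have hbpow : ((1:ℝ)/2) ^ (-((2:ℝ) + 1) / 2) = 2 * Real.sqrt 2 := by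
    rw [one_div, Real.inv_rpow (by norm_num : (0:ℝ) ≤ 2), ← Real.rpow_neg (by norm_num : (0:ℝ) ≤ 2),
      show (-(-((2:ℝ) + 1) / 2)) = 1 + 1/2 by norm_num,
      Real.rpow_add (by norm_num : (0:ℝ) < 2), Real.rpow_one, ← Real.sqrt_eq_rpow]
  rw [h1, h2, hbpow, hgam]
  have hs2 : Real.sqrt 2 * Real.sqrt 2 = 2 := Real.mul_self_sqrt (by norm_num)
  have hs : Real.sqrt (2 * π) = Real.sqrt 2 * Real.sqrt π := Real.sqrt_mul (by norm_num) _
  have hπ : (0:ℝ) < Real.sqrt π := Real.sqrt_pos.mpr Real.pi_pos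
  have h2' : (0:ℝ) < Real.sqrt 2 := Real.sqrt_pos.mpr (by norm_num)
  rw [hs]
  field_simp

lemma integrable_sq_gaussian : Integrable (fun x : ℝ => x ^ 2) (gaussianReal 0 1) := by
  rw [gaussianReal_of_var_ne_zero 0 one_ne_zero]
  have hpdf : gaussianPDF 0 1 = fun x => ((Real.toNNReal (gaussianPDFReal 0 1 x) : ℝ≥0) : ℝ≥0∞) := rfl
  rw [hpdf, integrable_withDensity_iff_integrable_smul
    ((measurable_gaussianPDFReal 0 1).real_toNNReal)]
  have hpt : ∀ x : ℝ, (Real.toNNReal (gaussianPDFReal 0 1 x)) • x ^ 2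
      = (Real.sqrt (2 * π))⁻¹ * (x ^ 2 * Real.exp (-(1/2) * x ^ 2)) := by
    intro x
    rw [NNReal.smul_def, smul_eq_mul, Real.coe_toNNReal _ (gaussianPDFReal_nonneg 0 1 x)]
    rw [gaussianPDFReal]
    push_cast
    ring_nf
  simp_rw [hpt]
  have := integrable_rpow_mul_exp_neg_mul_sq (b := 1/2) (by norm_num) (s := 2) (by norm_num)
  have hcast : ∀ x : ℝ, x ^ (2:ℝ) = x ^ (2:ℕ) := fun x => by
    rw [show ((2:ℝ)) = ((2:ℕ):ℝ) by norm_num, Real.rpow_natCast]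
  simp_rw [hcast] at this
  exact this.const_mul _

lemma gaussianReal_map_neg : (gaussianReal 0 1).map (fun x : ℝ => -x) = gaussianReal 0 1 := by
  have h := gaussianReal_map_const_mul (μ := 0) (v := 1) (-1)
  have h1 : (fun x : ℝ => -1 * x) = fun x : ℝ => -x := by funext x; ring
  have h2 : (⟨(-1:ℝ)^2, sq_nonneg _⟩ : ℝ≥0) = 1 := by ext; norm_num
  simp only [h2, mul_zero, one_mul] at h
  rw [ProbabilityTheory.gaussianReal_map_neg, neg_zero]

lemma pi_gauss_map_eval (n : ℕ) (i : Fin n) :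
    (Measure.pi fun _ : Fin n => gaussianReal 0 1).map (fun y => y i) = gaussianReal 0 1 := by
  ext s hs
  rw [Measure.map_apply (measurable_pi_apply i) hs]
  have hset : (fun y : Fin n → ℝ => y i) ⁻¹' s
      = Set.univ.pi (Function.update (fun _ : Fin n => (Set.univ : Set ℝ)) i s) := by
    ext y
    simp only [Set.mem_preimage, Set.mem_pi, Set.mem_univ, true_implies]
    constructor
    · intro h j
      rcases eq_or_ne j i with rfl | hj
      · simpa using h
      · simp [Function.update_of_ne hj]
    · intro h
      have := h i
      simpa using this
  rw [hset, Measure.pi_pi]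
  rw [Finset.prod_eq_single i]
  · simp
  · intro j _ hj
    simp [Function.update_of_ne hj]
  · simp

lemma pi_gauss_map_neg (n : ℕ) :
    (Measure.pi fun _ : Fin n => gaussianReal 0 1).map (fun y => -y)
      = Measure.pi fun _ : Fin n => gaussianReal 0 1 := by
  refine (Measure.pi_eq fun s hs => ?_).symm
  rw [Measure.map_apply measurable_neg (MeasurableSet.univ_pi hs)]
  have hset : (fun y : Fin n → ℝ => -y) ⁻¹' (Set.univ.pi s)
      = Set.univ.pi fun i => (fun x : ℝ => -x) ⁻¹' (s i) := by
    ext y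
    simp [Set.mem_pi]
  rw [hset, Measure.pi_pi]
  refine Finset.prod_congr rfl fun i _ => ?_
  conv_rhs => rw [← _root_.gaussianReal_map_neg]
  rw [Measure.map_apply measurable_neg (hs i)]

instance stdGaussian_prob (n : ℕ) : IsProbabilityMeasure (stdGaussian n) :=
  Measure.isProbabilityMeasure_map
    (MeasurableEquiv.toLp 2 (Fin n → ℝ)).measurable.aemeasurable

lemma stdGaussian_map_neg (n : ℕ) :
    (stdGaussian n).map (fun ξ => -ξ) = stdGaussian n := by
  unfold _root_.stdGaussian
  rw [Measure.map_map measurable_neg (MeasurableEquiv.toLp 2 (Fin n → ℝ)).measurable]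
  have h1 : ((fun ξ : EuclideanSpace ℝ (Fin n) => -ξ) ∘ (MeasurableEquiv.toLp 2 (Fin n → ℝ)))
      = (MeasurableEquiv.toLp 2 (Fin n → ℝ)) ∘ (fun y : Fin n → ℝ => -y) := rfl
  rw [h1, ← Measure.map_map (MeasurableEquiv.toLp 2 (Fin n → ℝ)).measurable measurable_neg,
    pi_gauss_map_neg]

lemma stdGaussian_integral_neg {n : ℕ} (F : EuclideanSpace ℝ (Fin n) → ℝ) (hF : Continuous F) :
    ∫ ξ, F (-ξ) ∂(stdGaussian n) = ∫ ξ, F ξ ∂(stdGaussian n) := by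
  conv_rhs => rw [← stdGaussian_map_neg n]
  rw [integral_map measurable_neg.aemeasurable hF.aestronglyMeasurable]

lemma stdGaussian_integral_normsq (n : ℕ) :
    ∫ ξ, ‖ξ‖ ^ 2 ∂(stdGaussian n) = n := by
  unfold _root_.stdGaussian
  rw [integral_map_equiv (MeasurableEquiv.toLp 2 (Fin n → ℝ)) (fun ξ => ‖ξ‖ ^ 2)]
  have hpt : ∀ y : Fin n → ℝ, ‖(MeasurableEquiv.toLp 2 (Fin n → ℝ)) y‖ ^ 2
      = ∑ i, (y i) ^ 2 := by
    intro y
    rw [EuclideanSpace.norm_eq, Real.sq_sqrt (by positivity)]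
    refine Finset.sum_congr rfl fun i _ => ?_
    simp [MeasurableEquiv.toLp_apply, sq_abs]
  simp_rw [hpt]
  have hint : ∀ i : Fin n, Integrable (fun y : Fin n → ℝ => (y i) ^ 2)
      (Measure.pi fun _ : Fin n => gaussianReal 0 1) := by
    intro i
    have := integrable_sq_gaussian
    rw [← pi_gauss_map_eval n i] at this
    exact (integrable_map_measure (continuous_pow 2).aestronglyMeasurable
      (measurable_pi_apply i).aemeasurable).mp this
  rw [integral_finset_sum _ fun i _ => hint i]
  have hval : ∀ i : Fin n, ∫ y : Fin n → ℝ, (y i) ^ 2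
      ∂(Measure.pi fun _ : Fin n => gaussianReal 0 1) = 1 := by
    intro i
    have h := integral_map (μ := Measure.pi fun _ : Fin n => gaussianReal 0 1)
      (φ := fun y : Fin n → ℝ => y i) (measurable_pi_apply i).aemeasurable
      (f := fun x : ℝ => x ^ 2) (continuous_pow 2).aestronglyMeasurable
    rw [pi_gauss_map_eval n i, integral_ennreal_smooth] at h
    exact h.symm
  simp [hval]

lemma stdGaussian_integrable_normsq (n : ℕ) :
    Integrable (fun ξ : EuclideanSpace ℝ (Fin n) => ‖ξ‖ ^ 2) (stdGaussian n) := by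
  unfold _root_.stdGaussian
  rw [(MeasurableEquiv.measurableEmbedding
    (MeasurableEquiv.toLp 2 (Fin n → ℝ))).integrable_map_iff]
  have hpt : ((fun ξ : EuclideanSpace ℝ (Fin n) => ‖ξ‖ ^ 2)
      ∘ (MeasurableEquiv.toLp 2 (Fin n → ℝ)))
      = fun y : Fin n → ℝ => ∑ i, (y i) ^ 2 := by
    funext y
    simp only [Function.comp_apply]
    rw [EuclideanSpace.norm_eq, Real.sq_sqrt (by positivity)]
    refine Finset.sum_congr rfl fun i _ => ?_
    simp [MeasurableEquiv.toLp_apply, sq_abs]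
  rw [hpt]
  refine integrable_finset_sum _ fun i _ => ?_
  have := integrable_sq_gaussian
  rw [← pi_gauss_map_eval n i] at this
  exact (integrable_map_measure (continuous_pow 2).aestronglyMeasurable
    (measurable_pi_apply i).aemeasurable).mp this

lemma stdGaussian_integrable_norm (n : ℕ) :
    Integrable (fun ξ : EuclideanSpace ℝ (Fin n) => ‖ξ‖) (stdGaussian n) := by
  refine Integrable.mono' ((integrable_const 1).add (stdGaussian_integrable_normsq n))
    continuous_norm.aestronglyMeasurable ?_
  filter_upwards with ξ
  rw [norm_norm]
  simp only [Pi.add_apply]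
  nlinarith [norm_nonneg ξ, sq_nonneg (‖ξ‖ - 1)]

lemma stdGaussian_integral_norm_le (n : ℕ) (hn : 1 ≤ n) :
    ∫ ξ, ‖ξ‖ ∂(stdGaussian n) ≤ Real.sqrt n := by
  have hs : (0:ℝ) < Real.sqrt n := Real.sqrt_pos.mpr (by exact_mod_cast Nat.pos_of_ne_zero (by omega))
  have hmono : ∫ ξ, ‖ξ‖ ∂(stdGaussian n)
      ≤ ∫ ξ, ((n : ℝ) + ‖ξ‖ ^ 2) / (2 * Real.sqrt n) ∂(stdGaussian n) := by
    refine integral_mono (stdGaussian_integrable_norm n)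
      (((integrable_const _).add (stdGaussian_integrable_normsq n)).div_const _) fun ξ => ?_
    rw [le_div_iff₀ (by positivity)]
    nlinarith [two_mul_le_add_sq (Real.sqrt n) ‖ξ‖, Real.sq_sqrt (Nat.cast_nonneg (α := ℝ) n)]
  refine hmono.trans ?_
  rw [integral_div, integral_add (integrable_const _) (stdGaussian_integrable_normsq n),
    integral_const, stdGaussian_integral_normsq n]
  simp only [measure_univ, probReal_univ, ENNReal.toReal_one, one_smul]
  rw [div_le_iff₀ (by positivity)]
  nlinarith [Real.sq_sqrt (Nat.cast_nonneg (α := ℝ) n)]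

lemma integrable_f_shift {n : ℕ} (f : EuclideanSpace ℝ (Fin n) → ℝ) (D : ℝ)
    (hlip : ∀ x y : EuclideanSpace ℝ (Fin n), |f x - f y| ≤ D * ‖x - y‖)
    (hf : Continuous f) (x : EuclideanSpace ℝ (Fin n)) (c : ℝ) :
    Integrable (fun ξ => f (x + c • ξ)) (stdGaussian n) := by
  refine Integrable.mono' ((integrable_const (|f x|)).add
    (((stdGaussian_integrable_norm n).const_mul (D * |c|))))
    ((hf.comp (continuous_const.add (continuous_id.const_smul c))).aestronglyMeasurable) ?_
  filter_upwards with ξ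
  simp only [Pi.add_apply]
  have h1 : |f (x + c • ξ) - f x| ≤ D * (|c| * ‖ξ‖) := by
    have := hlip (x + c • ξ) x
    simpa [norm_smul, Real.norm_eq_abs] using this
  have h2 : |f (x + c • ξ)| - |f x| ≤ |f (x + c • ξ) - f x| := abs_sub_abs_le_abs_sub _ _
  rw [Real.norm_eq_abs]
  nlinarith [abs_nonneg (f x)]

theorem stmt4 (n : ℕ) (hn : 1 ≤ n) (f : EuclideanSpace ℝ (Fin n) → ℝ) (D : ℝ) (hD : 0 ≤ D)
    (hconv : ConvexOn ℝ Set.univ f)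
    (hlip : ∀ x y : EuclideanSpace ℝ (Fin n), |f x - f y| ≤ D * ‖x - y‖)
    (μ : ℝ) (hμ : 0 < μ)
    (x g : EuclideanSpace ℝ (Fin n))
    (hsub : ∀ z : EuclideanSpace ℝ (Fin n),
      gaussianSmoothed f μ z ≥ gaussianSmoothed f μ x + ⟪g, z - x⟫) :
    ∀ z : EuclideanSpace ℝ (Fin n),
      f z ≥ f x - μ * D * Real.sqrt n + ⟪g, z - x⟫ := by
  have hf : Continuous f := by
    have : LipschitzWith ⟨D, hD⟩ f := by
      refine LipschitzWith.of_dist_le_mul fun a b => ?_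
      rw [dist_eq_norm]
      rw [Real.norm_eq_abs, dist_eq_norm]; exact hlip a b
    exact this.continuous
  intro z
  -- upper bound on smoothed function
  have key1 : gaussianSmoothed f μ z ≤ f z + μ * D * Real.sqrt n := by
    have hmono : gaussianSmoothed f μ z
        ≤ ∫ ξ, (f z + (D * μ) * ‖ξ‖) ∂(stdGaussian n) := by
      refine integral_mono (integrable_f_shift f D hlip hf z μ)
        ((integrable_const _).add ((stdGaussian_integrable_norm n).const_mul _)) fun ξ => ?_
      simp only [Pi.add_apply]
      have := hlip (z + μ • ξ) z
      have h2 : f (z + μ • ξ) - f z ≤ |f (z + μ • ξ) - f z| := le_abs_self _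
      have h3 : ‖z + μ • ξ - z‖ = |μ| * ‖ξ‖ := by
        simp [norm_smul, Real.norm_eq_abs]
      rw [h3, abs_of_pos hμ] at this
      nlinarith
    refine hmono.trans ?_
    rw [integral_add (integrable_const _) ((stdGaussian_integrable_norm n).const_mul _),
      integral_const, integral_const_mul]
    simp only [measure_univ, probReal_univ, ENNReal.toReal_one, one_smul]
    have := stdGaussian_integral_norm_le n hn
    nlinarith [mul_nonneg hD hμ.le]
  -- lower bound : f x ≤ smoothed at x
  have key2 : f x ≤ gaussianSmoothed f μ x := by
    have hrev : ∫ ξ, f (x - μ • ξ) ∂(stdGaussian n) = gaussianSmoothed f μ x := by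
      have := stdGaussian_integral_neg (fun ξ => f (x + μ • ξ))
        (hf.comp (continuous_const.add (continuous_id.const_smul μ)))
      simp only [smul_neg, ← sub_eq_add_neg] at this
      exact this
    have hint1 := integrable_f_shift f D hlip hf x μ
    have hint2 : Integrable (fun ξ => f (x - μ • ξ)) (stdGaussian n) := by
      have := integrable_f_shift f D hlip hf x (-μ)
      simpa [neg_smul, ← sub_eq_add_neg] using this
    have hpt : ∀ ξ : EuclideanSpace ℝ (Fin n),
        f x ≤ (f (x + μ • ξ) + f (x - μ • ξ)) / 2 := by
      intro ξ
      have hmid : (1/2 : ℝ) • (x + μ • ξ) + (1/2 : ℝ) • (x - μ • ξ) = x := by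
        module
      have := hconv.2 (Set.mem_univ (x + μ • ξ)) (Set.mem_univ (x - μ • ξ))
        (by norm_num : (0:ℝ) ≤ 1/2) (by norm_num : (0:ℝ) ≤ 1/2) (by norm_num)
      rw [hmid] at this
      rw [smul_eq_mul, smul_eq_mul] at this
      linarith
    have hmono : f x ≤ ∫ ξ, (f (x + μ • ξ) + f (x - μ • ξ)) / 2 ∂(stdGaussian n) := by
      have hconst : f x = ∫ _ξ, f x ∂(stdGaussian n) := by
        rw [integral_const]; simp
      rw [hconst]
      exact integral_mono (integrable_const _) ((hint1.add hint2).div_const 2) hpt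
    rw [integral_div, integral_add hint1 hint2, hrev,
      show (∫ ξ, f (x + μ • ξ) ∂(stdGaussian n)) = gaussianSmoothed f μ x from rfl] at hmono
    linarith
  have key3 := hsub z
  linarith
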